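/- For M ≥ 8, 0 < θ < π/M, and 1 ≤ q ≤ M/2 − 3: 4 cos(π(q+1)/M − θ/2) sin(π/M) ≥ 4 sin(θ/2) sin(2π/M). -/

import Mathlib

open Real

/-- For `M ≥ 8`, `0 < θ < π/M`, and `1 ≤ q ≤ M/2 − 3`:
`4 cos(π(q+1)/M − θ/2) sin(π/M) ≥ 4 sin(θ/2) sin(2π/M)`. -/
theorem stmt_5 (M : ℕ) (hM : 8 ≤ M) (θ : ℝ) (hθ0 : 0 < θ) (hθ : θ < π / M)
    (q : ℕ) (hq1 : 1 ≤ q) (hq2 : q ≤ M / 2 - 3) :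
    4 * Real.sin (θ / 2) * Real.sin (2 * π / M)
      ≤ 4 * Real.cos (π * (q + 1) / M - θ / 2) * Real.sin (π / M) := by
  have hMn : 2 * q + 6 ≤ M := by omega
  have hMr : (8:ℝ) ≤ M := by exact_mod_cast hM
  have hMpos : (0:ℝ) < M := by linarith
  have hqr : 2 * (q:ℝ) + 6 ≤ M := by exact_mod_cast hMn
  have hπ := Real.pi_pos
  -- θ/2 bounds
  have hθM : θ < π / M := hθ
  have hθ2 : θ / 2 < π / M := by
    have : π / M > 0 := by positivity
    linarith
  -- sin(θ/2) ≤ sin(π/M)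
  have h1 : Real.sin (θ / 2) ≤ Real.sin (π / M) := by
    apply Real.sin_le_sin_of_le_of_le_pi_div_two
    · linarith
    · calc π / M ≤ π / 8 := by
            apply div_le_div_of_nonneg_left hπ.le (by norm_num) hMr
          _ ≤ π / 2 := by linarith
    · linarith
  set a : ℝ := π * (q + 1) / M - θ / 2 with ha
  -- a bounds
  have hq1r : (1:ℝ) ≤ q := by exact_mod_cast hq1
  have ha0 : 0 ≤ a := by
    have : π / M ≤ π * (q + 1) / M := by
      gcongr
      nlinarith
    simp only [ha]; linarith
  have haub : a ≤ π / 2 - 2 * π / M := by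
    have h : π * (q + 1) / M ≤ π / 2 - 2 * π / M := by
      rw [div_le_iff₀ hMpos]
      have h3 : (q:ℝ) + 1 ≤ M / 2 - 2 := by linarith
      have hkey : (π / 2 - 2 * π / M) * M = π * M / 2 - 2 * π := by
        field_simp
      rw [hkey]; nlinarith
    simp only [ha]; linarith
  have h2 : Real.sin (2 * π / M) ≤ Real.cos a := by
    rw [← Real.cos_pi_div_two_sub]
    apply Real.cos_le_cos_of_nonneg_of_le_pi ha0
    · have : 2 * π / M ≥ 0 := by positivity
      linarith
    · exact haub
  -- nonnegativity
  have hs2 : 0 ≤ Real.sin (2 * π / M) := by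
    apply Real.sin_nonneg_of_nonneg_of_le_pi
    · positivity
    · rw [div_le_iff₀ hMpos]; nlinarith
  have hsθ : 0 ≤ Real.sin (θ / 2) := by
    apply Real.sin_nonneg_of_nonneg_of_le_pi
    · linarith
    · have : π / M ≤ π := by rw [div_le_iff₀ hMpos]; nlinarith
      linarith
  have := mul_le_mul h1 h2 hs2 (Real.sin_nonneg_of_nonneg_of_le_pi (by positivity)
    (by rw [div_le_iff₀ hMpos]; nlinarith))
  nlinarith [this]
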